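/- arXiv:1812.02444 — 2 statements merged into one kernel-verified Lean document; each statement's English description precedes it below -/
import Mathlib

section
/- Let $p\in\mathcal{P}^n_{\mathbb{K},+}[\mathbf{X}]$ with $p(\mathbf{z}) = 0$ for some $\mathbf{z}\in\mathbb{K}$. Then $t\mapsto G(tL(\mathbf{z}))$ remains bounded as $t\to+\infty$, hence $G$ is not coercive. -/
open MvPolynomial Matrix BigOperators

/-- Multi-indices `α` with `|α| ≤ m`, each component bounded by `m`. -/
def MIdx (d m : ℕ) : Type := {α : Fin d → Fin (m + 1) // ∑ i, ((α i : ℕ)) ≤ m}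

noncomputable instance (d m : ℕ) : Fintype (MIdx d m) := Subtype.fintype _
instance (d m : ℕ) : DecidableEq (MIdx d m) := Subtype.instDecidableEq

/-- The monomial `X^α` associated with a multi-index. -/
noncomputable def monIdx {d m : ℕ} (α : MIdx d m) : MvPolynomial (Fin d) ℝ :=
  ∏ i, (X i) ^ ((α.1 i : ℕ))

/-- The block-diagonal polynomial-valued localizing matrix
`B(X) = diag (g_1(X) D^{n_1}(X), …, g_{j*}(X) D^{n_{j*}}(X))`,
with `D^{n_j}(X)_{αβ} = X^α X^β`. -/
noncomputable def BPoly {d js : ℕ} (g : Fin js → MvPolynomial (Fin d) ℝ)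
    (nj : Fin js → ℕ) :
    Matrix ((j : Fin js) × MIdx d (nj j)) ((j : Fin js) × MIdx d (nj j))
      (MvPolynomial (Fin d) ℝ) :=
  fun p q => if p.1 = q.1 then g p.1 * monIdx p.2 * monIdx q.2 else 0

/-- Evaluation `B(x)` of the localizing matrix at a point. -/
noncomputable def BEval {d js : ℕ} (g : Fin js → MvPolynomial (Fin d) ℝ)
    (nj : Fin js → ℕ) (x : Fin d → ℝ) :
    Matrix ((j : Fin js) × MIdx d (nj j)) ((j : Fin js) × MIdx d (nj j)) ℝ :=
  fun p q => eval x (BPoly g nj p q)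


/-- `M(λ) = I + ∑ r λ_r B_r`. -/
noncomputable def Mmat {rs : ℕ} {ι : Type*} [Fintype ι] [DecidableEq ι]
    (B : Fin rs → Matrix ι ι ℝ) (lam : Fin rs → ℝ) : Matrix ι ι ℝ :=
  1 + ∑ r, lam r • B r

/-- The dual function `G(λ) = tr(M(λ)⁻¹) + ⟨λ, y⟩`. -/
noncomputable def Gfun {rs : ℕ} {ι : Type*} [Fintype ι] [DecidableEq ι]
    (B : Fin rs → Matrix ι ι ℝ) (y : Fin rs → ℝ) (lam : Fin rs → ℝ) : ℝ :=
  (Mmat B lam)⁻¹.trace + ∑ r, y r * lam r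

section Aux

variable {ι : Type*} [Fintype ι] [DecidableEq ι]

lemma myDotSelfNonneg (x : ι → ℝ) : 0 ≤ x ⬝ᵥ x :=
  Finset.sum_nonneg fun i _ => mul_self_nonneg _

lemma myPsdSmul {S : Matrix ι ι ℝ} (hS : S.PosSemidef) {t : ℝ} (ht : 0 ≤ t) :
    (t • S).PosSemidef := by
  refine posSemidef_iff_dotProduct_mulVec.mpr ⟨?_, ?_⟩
  · have h := hS.1
    unfold Matrix.IsHermitian at h ⊢
    rw [conjTranspose_smul, h, star_trivial]
  · intro x
    rw [smul_mulVec, dotProduct_smul]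
    exact mul_nonneg ht (hS.dotProduct_mulVec_nonneg x)

lemma myOnePlusPosDef {S : Matrix ι ι ℝ} (hS : S.PosSemidef) {t : ℝ} (ht : 0 ≤ t) :
    (1 + t • S).PosDef :=
  Matrix.PosDef.add_posSemidef Matrix.PosDef.one (myPsdSmul hS ht)

lemma myTraceInvBound {S : Matrix ι ι ℝ} (hS : S.PosSemidef) {t : ℝ} (ht : 0 ≤ t) :
    |(1 + t • S)⁻¹.trace| ≤ (Fintype.card ι : ℝ) := by
  set M := 1 + t • S with hMdef
  have hMpd : M.PosDef := myOnePlusPosDef hS ht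
  have hMunit : IsUnit M.det := hMpd.det_pos.ne'.isUnit
  have hgeq : ∀ x : ι → ℝ, x ⬝ᵥ x ≤ x ⬝ᵥ (M *ᵥ x) := by
    intro x
    have h := hS.dotProduct_mulVec_nonneg x
    rw [star_trivial] at h
    rw [hMdef, add_mulVec, one_mulVec, dotProduct_add, smul_mulVec, dotProduct_smul,
      smul_eq_mul]
    nlinarith [mul_nonneg ht h]
  have key : ∀ x : ι → ℝ, x ⬝ᵥ (M⁻¹ *ᵥ x) ≤ x ⬝ᵥ x := by
    intro x
    set y := M⁻¹ *ᵥ x with hy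
    have hMy : M *ᵥ y = x := by
      rw [hy, mulVec_mulVec, Matrix.mul_nonsing_inv _ hMunit, one_mulVec]
    have hxy : x ⬝ᵥ y = y ⬝ᵥ (M *ᵥ y) := by
      conv_lhs => rw [← hMy]
      rw [dotProduct_comm]
    have h1 : y ⬝ᵥ y ≤ y ⬝ᵥ (M *ᵥ y) := hgeq y
    have h0y : 0 ≤ y ⬝ᵥ y := myDotSelfNonneg y
    have h0x : 0 ≤ x ⬝ᵥ x := myDotSelfNonneg x
    have hcs : (y ⬝ᵥ x) ^ 2 ≤ (y ⬝ᵥ y) * (x ⬝ᵥ x) := by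
      have h := Finset.sum_mul_sq_le_sq_mul_sq Finset.univ y x
      simpa [dotProduct, pow_two] using h
    have hyx : y ⬝ᵥ x = x ⬝ᵥ y := dotProduct_comm _ _
    show x ⬝ᵥ y ≤ x ⬝ᵥ x
    rw [hxy]
    rcases le_or_gt (y ⬝ᵥ (M *ᵥ y)) 0 with h | h
    · linarith
    · nlinarith [hcs, h1, h0x, h0y]
  have hdiag : ∀ i, 0 ≤ M⁻¹ i i ∧ M⁻¹ i i ≤ 1 := by
    intro i
    have hMe : (Pi.single i 1 : ι → ℝ) ⬝ᵥ (M⁻¹ *ᵥ (Pi.single i 1)) = M⁻¹ i i := by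
      rw [mulVec_single, single_dotProduct]
      simp
    have hsing : (Pi.single i 1 : ι → ℝ) ⬝ᵥ (Pi.single i 1 : ι → ℝ) = 1 := by
      rw [single_dotProduct]
      simp
    constructor
    · have h := (hMpd.posSemidef.inv).dotProduct_mulVec_nonneg (Pi.single i 1)
      rwa [star_trivial, hMe] at h
    · have h := key (Pi.single i 1)
      rwa [hMe, hsing] at h
  rw [Matrix.trace]
  calc |∑ i, M⁻¹.diag i| ≤ ∑ i, |M⁻¹.diag i| := Finset.abs_sum_le_sum_abs _ _
    _ ≤ ∑ _i : ι, (1 : ℝ) := by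
        refine Finset.sum_le_sum fun i _ => ?_
        rw [Matrix.diag_apply, abs_of_nonneg (hdiag i).1]
        exact (hdiag i).2
    _ = (Fintype.card ι : ℝ) := by simp

end Aux


section Aux2

variable {ι : Type*} [Fintype ι] [DecidableEq ι]


lemma myPsdVecMulVec (v : ι → ℝ) : (vecMulVec v v).PosSemidef := by
  refine posSemidef_iff_dotProduct_mulVec.mpr ⟨?_, ?_⟩
  · ext i j
    simp [conjTranspose_apply, vecMulVec_apply, mul_comm]
  · intro x
    have h : vecMulVec v v *ᵥ x = (v ⬝ᵥ x) • v := by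
      ext i
      simp only [mulVec, vecMulVec_apply, dotProduct, Pi.smul_apply, smul_eq_mul,
        Finset.sum_mul]
      exact Finset.sum_congr rfl fun k _ => by ring
    rw [star_trivial, h, dotProduct_smul, smul_eq_mul, dotProduct_comm]
    exact mul_self_nonneg _

lemma myPsdSum {κ : Type*} [Fintype κ] (f : κ → Matrix ι ι ℝ)
    (hf : ∀ k, (f k).PosSemidef) : (∑ k, f k).PosSemidef :=
  Finset.sum_induction f _ (fun _ _ ha hb => ha.add hb) Matrix.PosSemidef.zero
    (fun k _ => hf k)

lemma monIdx_deg {d m : ℕ} (α : MIdx d m) : (monIdx α).totalDegree ≤ m := by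
  refine le_trans (totalDegree_finset_prod _ _) ?_
  calc ∑ i, ((X i : MvPolynomial (Fin d) ℝ) ^ ((α.1 i : ℕ))).totalDegree
      = ∑ i, ((α.1 i : ℕ)) := by simp [totalDegree_X_pow]
    _ ≤ m := α.2

lemma BPoly_deg {d js n : ℕ} (g : Fin js → MvPolynomial (Fin d) ℝ)
    (hgn : ∀ j, (g j).totalDegree ≤ n) (nj : Fin js → ℕ)
    (hnj : ∀ j, nj j = (n - (g j).totalDegree) / 2)
    (p q : (j : Fin js) × MIdx d (nj j)) : (BPoly g nj p q).totalDegree ≤ n := by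
  unfold BPoly
  split
  · rename_i h
    have h1 := monIdx_deg p.2
    have h2 := monIdx_deg q.2
    have hg := hgn p.1
    have e1 := hnj p.1
    have e2 := hnj q.1
    have hgeq : (g p.1).totalDegree = (g q.1).totalDegree := by rw [h]
    refine le_trans (totalDegree_mul _ _) ?_
    refine le_trans (add_le_add (le_trans (totalDegree_mul _ _)
      (add_le_add le_rfl h1)) h2) ?_
    omega
  · simp

lemma BEval_psd {d js : ℕ} (g : Fin js → MvPolynomial (Fin d) ℝ) (nj : Fin js → ℕ)
    (z : Fin d → ℝ) (hz : ∀ j, 0 ≤ eval z (g j)) : (BEval g nj z).PosSemidef := by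
  have hdecomp : BEval g nj z =
      ∑ j : Fin js, eval z (g j) •
        vecMulVec (fun p : (j : Fin js) × MIdx d (nj j) =>
            if p.1 = j then eval z (monIdx p.2) else 0)
          (fun p => if p.1 = j then eval z (monIdx p.2) else 0) := by
    ext p q
    rw [Matrix.sum_apply]
    simp only [Matrix.smul_apply, vecMulVec_apply, smul_eq_mul, BEval, BPoly]
    rw [Finset.sum_eq_single p.1]
    · by_cases h : p.1 = q.1
      · rw [if_pos h, if_pos rfl, if_pos h.symm]
        simp only [_root_.map_mul]
        ring
      · rw [if_neg h, if_pos rfl, if_neg (fun hh => h hh.symm)]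
        simp
    · intro k _ hk
      rw [if_neg (fun hh => hk hh.symm), zero_mul, mul_zero]
    · intro hk
      exact absurd (Finset.mem_univ _) hk
  rw [hdecomp]
  refine myPsdSum _ fun j => ?_
  exact myPsdSmul (myPsdVecMulVec _) (hz j)

end Aux2


theorem G_bounded_on_ray_and_not_coercive_if_p_vanishes
    (d js n rs : ℕ)
    (g : Fin js → MvPolynomial (Fin d) ℝ)
    (hgn : ∀ j, (g j).totalDegree ≤ n)
    (nj : Fin js → ℕ) (hnj : ∀ j, nj j = (n - (g j).totalDegree) / 2)
    (xr : Fin rs → Fin d → ℝ)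
    (hxK : ∀ r, ∀ j, 0 ≤ eval (xr r) (g j))
    (l : Fin rs → MvPolynomial (Fin d) ℝ)
    (hldeg : ∀ r, (l r).totalDegree ≤ n)
    (hdelta : ∀ r s, eval (xr s) (l r) = if r = s then (1 : ℝ) else 0)
    (huni : ∀ p : MvPolynomial (Fin d) ℝ, p.totalDegree ≤ n →
      p = ∑ r, C (eval (xr r) p) * l r)
    (p : MvPolynomial (Fin d) ℝ) (hpdeg : p.totalDegree ≤ n)
    (hpos : ∀ x : Fin d → ℝ, (∀ j, 0 ≤ eval x (g j)) → 0 ≤ eval x p)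
    (z : Fin d → ℝ) (hz : ∀ j, 0 ≤ eval z (g j)) (hzero : eval z p = 0) :
    (∃ Cb : ℝ, ∀ t : ℝ, 0 ≤ t →
        |Gfun (fun r => BEval g nj (xr r)) (fun r => eval (xr r) p)
            (fun r => t * eval z (l r))| ≤ Cb) ∧
    ¬ (∀ A : ℝ, ∃ R : ℝ, ∀ lam : EuclideanSpace ℝ (Fin rs),
        (Mmat (fun r => BEval g nj (xr r)) lam).PosDef → R ≤ ‖lam‖ →
          A ≤ Gfun (fun r => BEval g nj (xr r)) (fun r => eval (xr r) p) lam) := by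
  classical
  have hBz : ∀ t : ℝ,
      Mmat (fun r => BEval g nj (xr r)) (fun r => t * eval z (l r)) =
        1 + t • BEval g nj z := by
    intro t
    unfold Mmat
    congr 1
    have hsum : ∑ r, eval z (l r) • BEval g nj (xr r) = BEval g nj z := by
      ext pp qq
      rw [Matrix.sum_apply]
      simp only [Matrix.smul_apply, smul_eq_mul, BEval]
      have hu := huni (BPoly g nj pp qq) (BPoly_deg g hgn nj hnj pp qq)
      conv_rhs => rw [hu]
      rw [map_sum]
      refine Finset.sum_congr rfl fun r _ => ?_
      rw [_root_.map_mul, eval_C]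
      ring
    rw [← hsum, Finset.smul_sum]
    refine Finset.sum_congr rfl fun r _ => ?_
    rw [smul_smul]
  have hpz : ∑ r, eval (xr r) p * eval z (l r) = 0 := by
    have hu := huni p hpdeg
    have h2 : eval z p = ∑ r, eval (xr r) p * eval z (l r) := by
      conv_lhs => rw [hu]
      rw [map_sum]
      refine Finset.sum_congr rfl fun r _ => ?_
      rw [_root_.map_mul, eval_C]
    rw [← h2, hzero]
  have hSpsd : (BEval g nj z).PosSemidef := BEval_psd g nj z hz
  have hGval : ∀ t : ℝ,
      Gfun (fun r => BEval g nj (xr r)) (fun r => eval (xr r) p)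
        (fun r => t * eval z (l r)) = (1 + t • BEval g nj z)⁻¹.trace := by
    intro t
    unfold Gfun
    rw [hBz t]
    have hzero2 : ∑ r, eval (xr r) p * (t * eval z (l r)) = 0 := by
      calc ∑ r, eval (xr r) p * (t * eval z (l r))
          = t * ∑ r, eval (xr r) p * eval z (l r) := by
            rw [Finset.mul_sum]
            exact Finset.sum_congr rfl fun r _ => by ring
        _ = 0 := by rw [hpz, mul_zero]
    rw [hzero2, add_zero]
  constructor
  · refine ⟨(Fintype.card ((j : Fin js) × MIdx d (nj j)) : ℝ), fun t ht => ?_⟩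
    rw [hGval t]
    exact myTraceInvBound hSpsd ht
  · intro H
    obtain ⟨R, hR⟩ := H ((Fintype.card ((j : Fin js) × MIdx d (nj j)) : ℝ) + 1)
    have hone : (1 : ℝ) = ∑ r, eval z (l r) := by
      have hu := huni 1 (by rw [totalDegree_one]; exact Nat.zero_le n)
      calc (1 : ℝ) = eval z (1 : MvPolynomial (Fin d) ℝ) := by simp
        _ = ∑ r, eval z (l r) := by
            conv_lhs => rw [hu]
            rw [map_sum]
            refine Finset.sum_congr rfl fun r _ => ?_
            rw [_root_.map_mul, eval_C]
            simp
    set v0 : EuclideanSpace ℝ (Fin rs) := WithLp.toLp 2 (fun r => eval z (l r)) with hv0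
    have hv0ne : v0 ≠ 0 := by
      intro hcon
      have hzv : ∀ r, eval z (l r) = 0 := fun r => congrArg (fun v : EuclideanSpace ℝ (Fin rs) => v r) hcon
      rw [Finset.sum_congr rfl (fun r _ => hzv r), Finset.sum_const, smul_zero] at hone
      exact one_ne_zero hone
    have hnv : 0 < ‖v0‖ := norm_pos_iff.mpr hv0ne
    set t : ℝ := max 0 (R / ‖v0‖) with htdef
    have ht0 : 0 ≤ t := le_max_left _ _
    have hlamfun : (⇑(t • v0) : Fin rs → ℝ) = fun r => t * eval z (l r) := rfl
    have hnorm : R ≤ ‖t • v0‖ := by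
      rw [norm_smul, Real.norm_eq_abs, abs_of_nonneg ht0]
      have hle : R / ‖v0‖ ≤ t := le_max_right _ _
      calc R = (R / ‖v0‖) * ‖v0‖ := by field_simp
        _ ≤ t * ‖v0‖ := mul_le_mul_of_nonneg_right hle hnv.le
    have hpd : (Mmat (fun r => BEval g nj (xr r)) (t • v0)).PosDef := by
      have : Mmat (fun r => BEval g nj (xr r)) (t • v0) =
          1 + t • BEval g nj z := by
        exact hBz t
      rw [this]
      exact myOnePlusPosDef hSpsd ht0
    have hge := hR (t • v0) hpd hnorm
    have heq : Gfun (fun r => BEval g nj (xr r)) (fun r => eval (xr r) p) (t • v0)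
        = (1 + t • BEval g nj z)⁻¹.trace := by
      exact hGval t
    replace hge := hge.trans_eq heq
    have hb := myTraceInvBound hSpsd ht0
    have hb2 := abs_le.mp hb
    linarith [hb2.2]
end

section
/- (Cubic degeneracy of the Hessian at infinity.) Let $\mathbf{d}\in\mathbb{R}^{r_*}$ with $\|\mathbf{d}\| = 1$ and $\sum_r d_r B_r \succ 0$. Then there exists $C_{\mathbf{d}} > 0$ such that the minimal eigenvalue $\alpha(t\mathbf{d})$ of the Hessian $\nabla^2 G(t\mathbf{d})$ satisfies $\alpha(t\mathbf{d}) \leq C_{\mathbf{d}}(1+t)^{-3}$ for all $t\geq 0$. -/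
open Matrix BigOperators

attribute [local instance] Matrix.linftyOpNormedAddCommGroup Matrix.linftyOpNormedRing
  Matrix.linftyOpNormedAlgebra

namespace HessAux

section PD
variable {n : ℕ}



lemma posdef_one_add_smul {A : Matrix (Fin n) (Fin n) ℝ} (hA : A.PosDef) {t : ℝ} (ht : 0 ≤ t) :
    ((1 : Matrix (Fin n) (Fin n) ℝ) + t • A).PosDef := by
  have hsm : (t • A).IsHermitian := by
    show (t • A)ᴴ = t • A
    rw [Matrix.conjTranspose_smul, star_trivial, hA.1.eq]
  refine Matrix.PosDef.of_dotProduct_mulVec_pos (Matrix.isHermitian_one.add hsm) fun x hx => ?_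
  rw [add_mulVec, dotProduct_add, one_mulVec, smul_mulVec, dotProduct_smul]
  have h1 : 0 < star x ⬝ᵥ x := by
    have := Matrix.dotProduct_star_self_pos_iff (R := ℝ) (n := Fin n) (v := x)
    exact this.mpr hx
  have h2 : 0 ≤ t • (star x ⬝ᵥ A *ᵥ x) := smul_nonneg ht (le_of_lt (hA.dotProduct_mulVec_pos hx))
  linarith [h1, h2]

lemma isUnit_of_posDef {A : Matrix (Fin n) (Fin n) ℝ} (h : A.PosDef) : IsUnit A :=
  (Matrix.isUnit_iff_isUnit_det A).mpr (isUnit_iff_ne_zero.mpr (ne_of_gt h.det_pos))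

lemma trace_NANAN {A : Matrix (Fin n) (Fin n) ℝ} (hA : A.PosDef) {t : ℝ} (ht : 0 ≤ t) :
    (((1 : Matrix (Fin n) (Fin n) ℝ) + t • A)⁻¹ *
      (A * (((1 : Matrix (Fin n) (Fin n) ℝ) + t • A)⁻¹ *
        (A * ((1 : Matrix (Fin n) (Fin n) ℝ) + t • A)⁻¹)))).trace
      = ∑ i, (hA.1.eigenvalues i) ^ 2 * ((1 + t * hA.1.eigenvalues i)⁻¹) ^ 3 := by
  set U : Matrix (Fin n) (Fin n) ℝ := (Matrix.IsHermitian.eigenvectorUnitary hA.1 : Matrix (Fin n) (Fin n) ℝ) with hU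
  set a : Fin n → ℝ := hA.1.eigenvalues with ha
  have hU1 : U * star U = 1 := Matrix.mem_unitaryGroup_iff.mp (Matrix.IsHermitian.eigenvectorUnitary hA.1).2
  have hU2 : star U * U = 1 := Matrix.mem_unitaryGroup_iff'.mp (Matrix.IsHermitian.eigenvectorUnitary hA.1).2
  have hAe : A = U * diagonal a * star U := by
    simpa [RCLike.ofReal_real_eq_id] using hA.1.spectral_theorem
  have hapos : ∀ i, 0 < a i := fun i => hA.eigenvalues_pos i
  have hpos' : ∀ i, 0 < 1 + t * a i := fun i =>
    add_pos_of_pos_of_nonneg one_pos (mul_nonneg ht (hapos i).le)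
  have hM : (1 : Matrix (Fin n) (Fin n) ℝ) + t • A
      = U * diagonal (fun i => 1 + t * a i) * star U := by
    have hd : (diagonal (fun i => 1 + t * a i) : Matrix (Fin n) (Fin n) ℝ)
        = 1 + t • diagonal a := by
      ext i j
      by_cases h : i = j <;>
        simp [Matrix.diagonal_apply, Matrix.one_apply, Matrix.add_apply, Matrix.smul_apply, h]
    rw [hd, Matrix.mul_add, Matrix.add_mul, Matrix.mul_one, hU1, Matrix.mul_smul,
      Matrix.smul_mul, hAe]
  have cancel1 : ∀ X : Matrix (Fin n) (Fin n) ℝ, star U * (U * X) = X := fun X => by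
    rw [← Matrix.mul_assoc, hU2, Matrix.one_mul]
  have hMinv : ((1 : Matrix (Fin n) (Fin n) ℝ) + t • A)⁻¹
      = U * (diagonal (fun i => (1 + t * a i)⁻¹) * star U) := by
    rw [hM]
    refine Matrix.inv_eq_left_inv ?_
    simp only [Matrix.mul_assoc, cancel1]
    rw [← Matrix.mul_assoc (diagonal fun i => (1 + t * a i)⁻¹), diagonal_mul_diagonal]
    have h5 : (fun i => (1 + t * a i)⁻¹ * (1 + t * a i)) = fun _ => (1 : ℝ) := by
      funext i; exact inv_mul_cancel₀ (hpos' i).ne'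
    rw [h5, diagonal_one, Matrix.one_mul, hU1]
  have hAe2 : A = U * (diagonal a * star U) := by rw [hAe, Matrix.mul_assoc]
  rw [hMinv, hAe2]
  simp only [Matrix.mul_assoc, cancel1]
  rw [Matrix.trace_mul_comm]
  simp only [Matrix.mul_assoc]
  rw [hU2, Matrix.mul_one]
  simp only [diagonal_mul_diagonal]
  rw [Matrix.trace_diagonal]
  refine Finset.sum_congr rfl fun i _ => ?_
  ring

end PD

variable {rs : ℕ}

noncomputable def traceCLM (rs : ℕ) : Matrix (Fin rs) (Fin rs) ℝ →L[ℝ] ℝ :=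
  LinearMap.toContinuousLinearMap (Matrix.traceLinearMap (Fin rs) ℝ ℝ)

@[simp] lemma traceCLM_apply (X : Matrix (Fin rs) (Fin rs) ℝ) : traceCLM rs X = X.trace := rfl

section

variable (B : Fin rs → Matrix (Fin rs) (Fin rs) ℝ) (y : Fin rs → ℝ)

noncomputable def Lmap : EuclideanSpace ℝ (Fin rs) →L[ℝ] Matrix (Fin rs) (Fin rs) ℝ :=
  ∑ r, (EuclideanSpace.proj (𝕜 := ℝ) r).smulRight (B r)

lemma Lmap_apply (v : EuclideanSpace ℝ (Fin rs)) : Lmap B v = ∑ r, v r • B r := by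
  simp [Lmap]

noncomputable def Mfun (lam : EuclideanSpace ℝ (Fin rs)) : Matrix (Fin rs) (Fin rs) ℝ :=
  1 + ∑ r, lam r • B r

noncomputable def Nfun (lam : EuclideanSpace ℝ (Fin rs)) : Matrix (Fin rs) (Fin rs) ℝ :=
  Ring.inverse (Mfun B lam)

noncomputable def yCLM : EuclideanSpace ℝ (Fin rs) →L[ℝ] ℝ :=
  ∑ r, (EuclideanSpace.proj (𝕜 := ℝ) r).smulRight (y r)

lemma yCLM_apply (v : EuclideanSpace ℝ (Fin rs)) : yCLM y v = ∑ r, v r * y r := by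
  simp [yCLM]

noncomputable def Dprime (lam : EuclideanSpace ℝ (Fin rs)) :
    EuclideanSpace ℝ (Fin rs) →L[ℝ] Matrix (Fin rs) (Fin rs) ℝ :=
  (-(ContinuousLinearMap.mulLeftRight ℝ _ (Nfun B lam) (Nfun B lam))).comp (Lmap B)

noncomputable def D (lam : EuclideanSpace ℝ (Fin rs)) :
    EuclideanSpace ℝ (Fin rs) →L[ℝ] ℝ :=
  (traceCLM rs).comp (Dprime B lam) + yCLM y

lemma hasFDerivAt_Mfun (lam : EuclideanSpace ℝ (Fin rs)) :
    HasFDerivAt (Mfun B) (Lmap B) lam := by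
  have h : HasFDerivAt (𝕜 := ℝ) (fun lam : EuclideanSpace ℝ (Fin rs) => ∑ r, lam r • B r)
      (Lmap B) lam := by
    refine HasFDerivAt.fun_sum fun r _ => ?_
    exact HasFDerivAt.smul_const ((EuclideanSpace.proj (𝕜 := ℝ) r).hasFDerivAt) (B r)
  exact h.const_add 1

lemma hasFDerivAt_Nfun (lam : EuclideanSpace ℝ (Fin rs)) (h : IsUnit (Mfun B lam)) :
    HasFDerivAt (Nfun B) (Dprime B lam) lam := by
  obtain ⟨u, hu⟩ := h
  have h0 := hasFDerivAt_ringInverse (𝕜 := ℝ) u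
  have hNu : (↑u⁻¹ : Matrix (Fin rs) (Fin rs) ℝ) = Nfun B lam := by
    rw [Nfun, ← hu, Ring.inverse_unit]
  rw [hu] at h0
  have h1 := h0.comp lam (hasFDerivAt_Mfun B lam)
  rw [hNu] at h1
  exact h1

lemma hasFDerivAt_F (lam : EuclideanSpace ℝ (Fin rs)) (h : IsUnit (Mfun B lam)) :
    HasFDerivAt
      (fun lam : EuclideanSpace ℝ (Fin rs) =>
        (((1 : Matrix (Fin rs) (Fin rs) ℝ) + ∑ r, lam r • B r)⁻¹).trace + ∑ r, lam r * y r)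
      (D B y lam) lam := by
  have htr : HasFDerivAt
      (fun lam : EuclideanSpace ℝ (Fin rs) =>
        (((1 : Matrix (Fin rs) (Fin rs) ℝ) + ∑ r, lam r • B r)⁻¹).trace)
      ((traceCLM rs).comp (Dprime B lam)) lam := by
    have heq : (fun lam : EuclideanSpace ℝ (Fin rs) =>
        (((1 : Matrix (Fin rs) (Fin rs) ℝ) + ∑ r, lam r • B r)⁻¹).trace)
        = fun lam => traceCLM rs (Nfun B lam) := by
      funext lam
      rw [traceCLM_apply, Nfun, ← Matrix.nonsing_inv_eq_ringInverse]
      rfl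
    rw [heq]
    exact (traceCLM rs).hasFDerivAt.comp lam (hasFDerivAt_Nfun B lam h)
  have hlin : HasFDerivAt (𝕜 := ℝ)
      (fun lam : EuclideanSpace ℝ (Fin rs) => ∑ r, lam r * y r) (yCLM y) lam := by
    refine HasFDerivAt.fun_sum fun r _ => ?_
    exact HasFDerivAt.smul_const ((EuclideanSpace.proj (𝕜 := ℝ) r).hasFDerivAt) (y r)
  exact htr.add hlin

lemma Dprime_apply (lam v : EuclideanSpace ℝ (Fin rs)) :
    Dprime B lam v = -(Nfun B lam * Lmap B v * Nfun B lam) := rfl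

lemma D_apply (lam v : EuclideanSpace ℝ (Fin rs)) :
    D B y lam v = (Dprime B lam v).trace + yCLM y v := rfl

lemma D_rep : D B y = fun lam =>
    (∑ r, (-(((Nfun B lam) * B r * (Nfun B lam)).trace)) •
      (EuclideanSpace.proj (𝕜 := ℝ) r : EuclideanSpace ℝ (Fin rs) →L[ℝ] ℝ)) + yCLM y := by
  funext lam
  ext v
  simp only [D_apply, Dprime_apply, ContinuousLinearMap.add_apply, ContinuousLinearMap.comp_apply,
    ContinuousLinearMap.sum_apply, ContinuousLinearMap.smul_apply,
    ContinuousLinearMap.neg_apply, ContinuousLinearMap.mulLeftRight_apply, traceCLM_apply,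
    Lmap_apply, smul_eq_mul, PiLp.proj_apply]
  congr 1
  rw [Finset.mul_sum, Finset.sum_mul, Matrix.trace_neg, Matrix.trace_sum, ← Finset.sum_neg_distrib]
  refine Finset.sum_congr rfl fun i _ => ?_
  rw [Matrix.mul_smul, Matrix.smul_mul, Matrix.trace_smul, smul_eq_mul]
  ring

lemma hess_eval (B : Fin rs → Matrix (Fin rs) (Fin rs) ℝ) (y : Fin rs → ℝ)
    (dvec : EuclideanSpace ℝ (Fin rs)) (hpos : (∑ r, dvec r • B r).PosDef)
    (t : ℝ) (ht : 0 ≤ t)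
    (hposdef1 : ((1 : Matrix (Fin rs) (Fin rs) ℝ) + t • ∑ r, dvec r • B r).PosDef)
    (htrN : (((1 : Matrix (Fin rs) (Fin rs) ℝ) + t • ∑ r, dvec r • B r)⁻¹ *
      ((∑ r, dvec r • B r) * (((1 : Matrix (Fin rs) (Fin rs) ℝ) + t • ∑ r, dvec r • B r)⁻¹ *
        ((∑ r, dvec r • B r) *
          ((1 : Matrix (Fin rs) (Fin rs) ℝ) + t • ∑ r, dvec r • B r)⁻¹)))).trace = c) :
    iteratedFDeriv ℝ 2
      (fun lam : EuclideanSpace ℝ (Fin rs) =>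
        (((1 : Matrix (Fin rs) (Fin rs) ℝ) + ∑ r, lam r • B r)⁻¹).trace + ∑ r, lam r * y r)
      (t • dvec) (fun _ => dvec) = 2 * c := by
  have hMxt : Mfun B (t • dvec) = 1 + t • ∑ r, dvec r • B r := by
    unfold Mfun
    congr 1
    rw [Finset.smul_sum]
    exact Finset.sum_congr rfl fun r _ => (smul_smul t (dvec r) (B r)).symm
  set A : Matrix (Fin rs) (Fin rs) ℝ := ∑ r, dvec r • B r with hA
  set xt : EuclideanSpace ℝ (Fin rs) := t • dvec with hxt
  have hUnit : IsUnit (Mfun B xt) := by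
    rw [hMxt]
    exact (Matrix.isUnit_iff_isUnit_det _).mpr
      (isUnit_iff_ne_zero.mpr (ne_of_gt hposdef1.det_pos))
  have hVopen : IsOpen {lam : EuclideanSpace ℝ (Fin rs) | IsUnit (Mfun B lam)} := by
    have hcont : Continuous (Mfun B) := by
      rw [continuous_iff_continuousAt]
      exact fun lam => (hasFDerivAt_Mfun B lam).continuousAt
    exact Units.isOpen.preimage hcont
  have hmem : {lam : EuclideanSpace ℝ (Fin rs) | IsUnit (Mfun B lam)} ∈ nhds xt :=
    hVopen.mem_nhds hUnit
  have hfe : (fderiv ℝ (fun lam : EuclideanSpace ℝ (Fin rs) =>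
      (((1 : Matrix (Fin rs) (Fin rs) ℝ) + ∑ r, lam r • B r)⁻¹).trace + ∑ r, lam r * y r))
      =ᶠ[nhds xt] D B y :=
    Filter.eventually_of_mem hmem fun lam hl => (hasFDerivAt_F B y lam hl).fderiv
  rw [iteratedFDeriv_two_apply, hfe.fderiv_eq]
  -- differentiability of D at xt
  have hNder := hasFDerivAt_Nfun B xt hUnit
  have hNdiff : DifferentiableAt ℝ (Nfun B) xt := hNder.differentiableAt
  have hDdiff : DifferentiableAt ℝ (D B y) xt := by
    rw [D_rep]
    refine DifferentiableAt.add_const _ ?_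
    refine DifferentiableAt.fun_sum fun r _ => ?_
    refine DifferentiableAt.smul_const ?_ _
    refine DifferentiableAt.neg ?_
    have hmul : DifferentiableAt ℝ (fun lam => Nfun B lam * B r * Nfun B lam) xt :=
      (hNdiff.mul_const (B r)).mul hNdiff
    exact ((traceCLM rs).differentiableAt.comp xt hmul : _)
  have heval : fderiv ℝ (D B y) xt (dvec) (dvec)
      = fderiv ℝ (fun lam => D B y lam dvec) xt dvec := by
    rw [fderiv_clm_apply hDdiff (differentiableAt_const dvec)]
    simp
  show fderiv ℝ (D B y) xt (dvec) (dvec) = 2 * c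
  rw [heval]
  -- explicit derivative of lam ↦ D lam dvec
  set N0 : Matrix (Fin rs) (Fin rs) ℝ := Nfun B xt with hN0
  have hLd : Lmap B dvec = A := by rw [Lmap_apply]
  have hphieq : (fun lam => D B y lam dvec)
      = fun lam => -(((Nfun B lam * A) * Nfun B lam).trace) + yCLM y dvec := by
    funext lam
    simp only [D_apply, Dprime_apply, ContinuousLinearMap.add_apply, ContinuousLinearMap.comp_apply,
      ContinuousLinearMap.neg_apply, ContinuousLinearMap.mulLeftRight_apply, traceCLM_apply,
      hLd, Matrix.trace_neg, Matrix.mul_assoc]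
  have h1 : HasFDerivAt (fun lam => Nfun B lam * A) ((Dprime B xt).smulRight A) xt :=
    hNder.mul_const' A
  have h2 : HasFDerivAt (fun lam => (Nfun B lam * A) * Nfun B lam)
      ((N0 * A) • Dprime B xt + ((Dprime B xt).smulRight A).smulRight N0) xt :=
    h1.mul' hNder
  have h3 : HasFDerivAt (fun lam => -(((Nfun B lam * A) * Nfun B lam).trace) + yCLM y dvec)
      (-((traceCLM rs).comp ((N0 * A) • Dprime B xt +
        ((Dprime B xt).smulRight A).smulRight N0))) xt := by
    exact (((traceCLM rs).hasFDerivAt.comp xt h2).neg).add_const _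
  rw [hphieq, h3.fderiv]
  have hDpd : Dprime B xt dvec = -(N0 * A * N0) := by
    simp only [Dprime_apply, ContinuousLinearMap.comp_apply, ContinuousLinearMap.neg_apply,
      ContinuousLinearMap.mulLeftRight_apply, hLd, hN0]
  have hN0inv : N0 = ((1 : Matrix (Fin rs) (Fin rs) ℝ) + t • A)⁻¹ := by
    rw [hN0, Nfun, hMxt, Matrix.nonsing_inv_eq_ringInverse]
  simp only [ContinuousLinearMap.neg_apply, ContinuousLinearMap.comp_apply,
    ContinuousLinearMap.add_apply, ContinuousLinearMap.smul_apply,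
    ContinuousLinearMap.smulRight_apply, hDpd, traceCLM_apply, smul_eq_mul]
  rw [← htrN, hN0inv]
  rw [show ((1 : Matrix (Fin rs) (Fin rs) ℝ) + t • A)⁻¹ *
      (A * (((1 : Matrix (Fin rs) (Fin rs) ℝ) + t • A)⁻¹ *
        (A * ((1 : Matrix (Fin rs) (Fin rs) ℝ) + t • A)⁻¹))) =
      ((1 : Matrix (Fin rs) (Fin rs) ℝ) + t • A)⁻¹ * A *
        (((1 : Matrix (Fin rs) (Fin rs) ℝ) + t • A)⁻¹ * A *
          ((1 : Matrix (Fin rs) (Fin rs) ℝ) + t • A)⁻¹) from by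
    simp [Matrix.mul_assoc]]
  simp only [Matrix.mul_neg, Matrix.neg_mul, Matrix.trace_neg, Matrix.trace_add]
  rw [show (1 + t • A)⁻¹ * A * (1 + t • A)⁻¹ * A * (1 + t • A)⁻¹
      = (1 + t • A)⁻¹ * A * ((1 + t • A)⁻¹ * A * (1 + t • A)⁻¹) from by
    simp [Matrix.mul_assoc]]
  ring

end

end HessAux

theorem hessian_min_eigenvalue_cubic_decay
    (rs : ℕ) (B : Fin rs → Matrix (Fin rs) (Fin rs) ℝ)
    (hsymm : ∀ r, (B r).IsSymm) (y : Fin rs → ℝ)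
    (dvec : EuclideanSpace ℝ (Fin rs)) (hd : ‖dvec‖ = 1)
    (hpos : (∑ r, dvec r • B r).PosDef) :
    ∃ Cd : ℝ, 0 < Cd ∧ ∀ t : ℝ, 0 ≤ t →
      (⨅ μ : {v : EuclideanSpace ℝ (Fin rs) // ‖v‖ = 1},
          iteratedFDeriv ℝ 2
            (fun lam : EuclideanSpace ℝ (Fin rs) =>
              (((1 : Matrix (Fin rs) (Fin rs) ℝ) + ∑ r, lam r • B r)⁻¹).trace
                + ∑ r, lam r * y r)
            (t • dvec) (fun _ => (μ : EuclideanSpace ℝ (Fin rs))))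
        ≤ Cd * ((1 + t) ^ 3)⁻¹ := by
  classical
  set a : Fin rs → ℝ := hpos.1.eigenvalues with ha
  have hapos : ∀ i, 0 < a i := fun i => hpos.eigenvalues_pos i
  have hminpos : ∀ i, 0 < min 1 (a i) := fun i => lt_min one_pos (hapos i)
  set Cd : ℝ := (∑ i, 2 * ((a i) ^ 2 * ((min 1 (a i))⁻¹) ^ 3)) + 1 with hCd
  have hsum_nonneg : 0 ≤ ∑ i, 2 * ((a i) ^ 2 * ((min 1 (a i))⁻¹) ^ 3) := by
    refine Finset.sum_nonneg fun i _ => ?_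
    have := pow_pos (inv_pos.mpr (hminpos i)) 3
    have := sq_nonneg (a i)
    nlinarith
  refine ⟨Cd, by rw [hCd]; linarith, fun t ht => ?_⟩
  have h1t : 0 < 1 + t := by linarith
  have hcube : (0:ℝ) < ((1 + t) ^ 3)⁻¹ := by positivity
  have hposdef1 := HessAux.posdef_one_add_smul hpos ht
  have htrN := HessAux.trace_NANAN hpos ht
  have hQ := HessAux.hess_eval B y dvec hpos t ht hposdef1 htrN
  set F : EuclideanSpace ℝ (Fin rs) → ℝ := fun lam =>
    (((1 : Matrix (Fin rs) (Fin rs) ℝ) + ∑ r, lam r • B r)⁻¹).trace + ∑ r, lam r * y r with hF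
  set T := iteratedFDeriv ℝ 2 F (t • dvec) with hT
  have hbdd : BddBelow (Set.range fun μ : {v : EuclideanSpace ℝ (Fin rs) // ‖v‖ = 1} =>
      T (fun _ => (μ : EuclideanSpace ℝ (Fin rs)))) := by
    refine ⟨-‖T‖, ?_⟩
    rintro x ⟨μ, rfl⟩
    have h := T.le_opNorm (fun _ => (μ : EuclideanSpace ℝ (Fin rs)))
    have hprod : (∏ _i : Fin 2, ‖(μ : EuclideanSpace ℝ (Fin rs))‖) = 1 := by
      simp [μ.2]
    rw [hprod, mul_one] at h
    have := (abs_le.mp (by simpa [Real.norm_eq_abs] using h)).1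
    simpa using this
  have hle := ciInf_le hbdd (⟨dvec, hd⟩ : {v : EuclideanSpace ℝ (Fin rs) // ‖v‖ = 1})
  refine le_trans hle ?_
  show T (fun _ => dvec) ≤ Cd * ((1 + t) ^ 3)⁻¹
  rw [hT, hF, hQ]
  have hterm : ∀ i : Fin rs, (a i) ^ 2 * ((1 + t * a i)⁻¹) ^ 3
      ≤ ((a i) ^ 2 * ((min 1 (a i))⁻¹) ^ 3) * ((1 + t) ^ 3)⁻¹ := by
    intro i
    have hmin := hminpos i
    have hkey : min 1 (a i) * (1 + t) ≤ 1 + t * a i := by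
      have h1 : min 1 (a i) ≤ 1 := min_le_left _ _
      have h2 : min 1 (a i) ≤ a i := min_le_right _ _
      nlinarith
    have hinv : (1 + t * a i)⁻¹ ≤ (min 1 (a i))⁻¹ * (1 + t)⁻¹ := by
      rw [← mul_inv]
      exact inv_anti₀ (mul_pos hmin h1t) hkey
    have hinvnn : 0 ≤ (1 + t * a i)⁻¹ := by
      have : 0 < 1 + t * a i := lt_of_lt_of_le (mul_pos hmin h1t) hkey
      positivity
    have hc := pow_le_pow_left₀ hinvnn hinv 3
    have h6 : ((min 1 (a i))⁻¹ * (1 + t)⁻¹) ^ 3 = ((min 1 (a i))⁻¹) ^ 3 * ((1 + t) ^ 3)⁻¹ := by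
      rw [mul_pow]
      congr 1
      rw [inv_pow]
    rw [h6] at hc
    calc (a i) ^ 2 * ((1 + t * a i)⁻¹) ^ 3
        ≤ (a i) ^ 2 * (((min 1 (a i))⁻¹) ^ 3 * ((1 + t) ^ 3)⁻¹) :=
          mul_le_mul_of_nonneg_left hc (sq_nonneg _)
      _ = ((a i) ^ 2 * ((min 1 (a i))⁻¹) ^ 3) * ((1 + t) ^ 3)⁻¹ := by ring
  calc 2 * ∑ i, (a i) ^ 2 * ((1 + t * a i)⁻¹) ^ 3
      ≤ 2 * ∑ i, ((a i) ^ 2 * ((min 1 (a i))⁻¹) ^ 3) * ((1 + t) ^ 3)⁻¹ := by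
        have := Finset.sum_le_sum fun i (_ : i ∈ Finset.univ) => hterm i
        linarith
    _ = (∑ i, 2 * ((a i) ^ 2 * ((min 1 (a i))⁻¹) ^ 3)) * ((1 + t) ^ 3)⁻¹ := by
        rw [Finset.sum_mul, Finset.mul_sum]
        exact Finset.sum_congr rfl fun i _ => by ring
    _ ≤ Cd * ((1 + t) ^ 3)⁻¹ := by
        refine mul_le_mul_of_nonneg_right ?_ (le_of_lt hcube)
        rw [hCd]; linarith
end
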